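/- Let T, w, r be positive integers and p = 1 - w^w r^r / (w+r)^{w+r}. If N > (w + r - 1) log(2T) / (−log p), then there exists a (w,r)-cover-free family with ground set size N and T blocks. -/

import Mathlib

open Finset Real

/-- A set system `F` on `X` is a `(w,r;d)`-cover-free family. -/
def IsCFF {X : Type} [Fintype X] [DecidableEq X] (w r d : ℕ) (F : Finset (Finset X)) : Prop :=
  ∀ WS RS : Finset (Finset X), WS ⊆ F → RS ⊆ F → WS.card = w → RS.card = r →
    Disjoint WS RS → d < ((WS.inf id) \ (RS.sup id)).card


open Finset Real

namespace ProbCFF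

lemma mem_finset_inf {ι α : Type*} [DecidableEq α] [Fintype α] {s : Finset ι} {f : ι → Finset α}
    {a : α} : a ∈ s.inf f ↔ ∀ i ∈ s, a ∈ f i := by
  induction s using Finset.cons_induction <;> simp [Finset.top_eq_univ, *]

def wt (w r : ℕ) (b : Bool) : ℕ := if b then w else r

def Wt (w r : ℕ) {N n₂ : ℕ} (M : Fin N → Fin n₂ → Bool) : ℕ := ∏ x, ∏ c, wt w r (M x c)

lemma sum_wt_rows {N n₂ : ℕ} (f : (Fin n₂ → Bool) → ℕ) :
    ∑ M : Fin N → Fin n₂ → Bool, ∏ x, f (M x) = (∑ v : Fin n₂ → Bool, f v) ^ N :=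
  (Fintype.sum_pow f N).symm

lemma row_sum_total (w r : ℕ) (n₂ : ℕ) :
    ∑ v : Fin n₂ → Bool, ∏ c, wt w r (v c) = (w + r) ^ n₂ := by
  rw [← Fintype.piFinset_univ, Finset.sum_prod_piFinset]
  have : ∀ c : Fin n₂, ∑ b : Bool, wt w r b = w + r := by intro c; simp [wt]
  rw [Finset.prod_congr rfl fun c _ => this c, Finset.prod_const, Finset.card_univ,
    Fintype.card_fin]

lemma row_sum_fixed (w r : ℕ) {n₂ : ℕ} (s t : Finset (Fin n₂)) (hst : Disjoint s t) :
    ∑ v ∈ univ.filter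
      (fun v : Fin n₂ → Bool => (∀ c ∈ s, v c = true) ∧ (∀ c ∈ t, v c = false)),
        ∏ c, wt w r (v c)
      = w ^ s.card * r ^ t.card * (w + r) ^ (n₂ - (s.card + t.card)) := by
  classical
  set tf : Fin n₂ → Finset Bool :=
    fun c => if c ∈ s then {true} else if c ∈ t then {false} else univ with htf
  have hset : univ.filter
      (fun v : Fin n₂ → Bool => (∀ c ∈ s, v c = true) ∧ (∀ c ∈ t, v c = false))
      = Fintype.piFinset tf := by
    ext v
    simp only [Fintype.mem_piFinset, mem_filter, mem_univ, true_and, htf]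
    constructor
    · rintro ⟨h1, h2⟩ c
      by_cases hc : c ∈ s
      · simp [hc, h1 c hc]
      · by_cases hc' : c ∈ t
        · simp [hc, hc', h2 c hc']
        · simp [hc, hc']
    · intro h
      constructor
      · intro c hc
        have := h c
        rw [if_pos hc] at this
        simpa using this
      · intro c hc
        have hcs : c ∉ s := fun hcs => (Finset.disjoint_left.mp hst hcs) hc
        have := h c
        rw [if_neg hcs, if_pos hc] at this
        simpa using this
  rw [hset, ← Finset.prod_univ_sum]
  have heval : ∀ c : Fin n₂, (∑ b ∈ tf c, wt w r b)
      = if c ∈ s then w else if c ∈ t then r else w + r := by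
    intro c
    by_cases hc : c ∈ s
    · simp [htf, hc, wt]
    · by_cases hc' : c ∈ t
      · simp [htf, hc, hc', wt]
      · simp [htf, hc, hc', wt]
  rw [Finset.prod_congr rfl fun c _ => heval c]
  -- now evaluate the product of the double ite
  have hsub : s ∪ t ⊆ univ := Finset.subset_univ _
  rw [← Finset.prod_sdiff hsub, Finset.prod_union hst]
  have h1 : ∏ c ∈ s, (if c ∈ s then w else if c ∈ t then r else w + r) = w ^ s.card := by
    rw [Finset.prod_congr rfl fun c hc => by rw [if_pos hc], Finset.prod_const]
  have h2 : ∏ c ∈ t, (if c ∈ s then w else if c ∈ t then r else w + r) = r ^ t.card := by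
    refine (Finset.prod_congr rfl fun c hc => ?_).trans (Finset.prod_const _)
    rw [if_neg (fun hcs => (Finset.disjoint_left.mp hst hcs) hc), if_pos hc]
  have h3 : ∏ c ∈ univ \ (s ∪ t), (if c ∈ s then w else if c ∈ t then r else w + r)
      = (w + r) ^ (n₂ - (s.card + t.card)) := by
    have : ∀ c ∈ univ \ (s ∪ t), (if c ∈ s then w else if c ∈ t then r else w + r) = w + r := by
      intro c hc
      rcases Finset.mem_sdiff.mp hc with ⟨-, hc⟩
      rw [if_neg (fun h => hc (Finset.mem_union_left _ h)),
        if_neg (fun h => hc (Finset.mem_union_right _ h))]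
    rw [Finset.prod_congr rfl this, Finset.prod_const, Finset.card_sdiff_of_subset hsub, Finset.card_univ,
      Fintype.card_fin, Finset.card_union_of_disjoint hst]
  rw [h1, h2, h3]
  ring

end ProbCFF
namespace ProbCFF

def good {n₂ : ℕ} (ws rs : Finset (Fin n₂)) (v : Fin n₂ → Bool) : Prop :=
  (∀ c ∈ ws, v c = true) ∧ (∀ c ∈ rs, v c = false)

instance {n₂ : ℕ} (ws rs : Finset (Fin n₂)) (v : Fin n₂ → Bool) : Decidable (good ws rs v) := by
  unfold good; infer_instance

def cand (w r n₂ : ℕ) : Finset (Finset (Fin n₂) × Finset (Fin n₂)) :=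
  ((univ.powersetCard w) ×ˢ (univ.powersetCard r)).filter fun pr => Disjoint pr.1 pr.2

def isBad {N n₂ : ℕ} (M : Fin N → Fin n₂ → Bool)
    (pr : Finset (Fin n₂) × Finset (Fin n₂)) : Prop :=
  ∀ x, ¬ good pr.1 pr.2 (M x)

instance {N n₂ : ℕ} (M : Fin N → Fin n₂ → Bool) (pr : Finset (Fin n₂) × Finset (Fin n₂)) :
    Decidable (isBad M pr) := by unfold isBad; infer_instance

def badPairs (w r : ℕ) {N n₂ : ℕ} (M : Fin N → Fin n₂ → Bool) :
    Finset (Finset (Fin n₂) × Finset (Fin n₂)) :=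
  (cand w r n₂).filter (isBad M)

def dupPairs {N n₂ : ℕ} (M : Fin N → Fin n₂ → Bool) : Finset (Fin n₂ × Fin n₂) :=
  (univ ×ˢ univ).filter fun pr => pr.1 ≠ pr.2 ∧ ∀ x, M x pr.1 = M x pr.2

lemma prod_ind {N : ℕ} (p : Fin N → Prop) [DecidablePred p] :
    (if (∀ x, p x) then (1 : ℕ) else 0) = ∏ x, if p x then 1 else 0 := by
  by_cases h : ∀ x, p x
  · rw [if_pos h]; exact (Finset.prod_eq_one fun x _ => by rw [if_pos (h x)]).symm
  · rw [if_neg h]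
    push_neg at h
    obtain ⟨x, hx⟩ := h
    exact (Finset.prod_eq_zero (Finset.mem_univ x) (by rw [if_neg hx])).symm

lemma row_sum_notgood (w r : ℕ) {n₂ : ℕ} (ws rs : Finset (Fin n₂)) (h : Disjoint ws rs) :
    ∑ v : Fin n₂ → Bool, (∏ c, wt w r (v c)) * (if good ws rs v then 0 else 1)
      = (w + r) ^ n₂ - w ^ ws.card * r ^ rs.card * (w + r) ^ (n₂ - (ws.card + rs.card)) := by
  classical
  have h1 : ∀ v : Fin n₂ → Bool, (∏ c, wt w r (v c)) * (if good ws rs v then 0 else 1)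
      = if ¬ good ws rs v then (∏ c, wt w r (v c)) else 0 := by
    intro v; by_cases hv : good ws rs v <;> simp [hv]
  rw [Finset.sum_congr rfl fun v _ => h1 v, ← Finset.sum_filter]
  have hsplit := Finset.sum_filter_add_sum_filter_not (univ : Finset (Fin n₂ → Bool))
    (fun v => good ws rs v) (fun v => ∏ c, wt w r (v c))
  have hgood : ∑ v ∈ univ.filter (fun v : Fin n₂ → Bool => good ws rs v), ∏ c, wt w r (v c)
      = w ^ ws.card * r ^ rs.card * (w + r) ^ (n₂ - (ws.card + rs.card)) :=
    row_sum_fixed w r ws rs h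
  have htot := row_sum_total w r n₂
  rw [← htot, ← hgood]
  exact Nat.eq_sub_of_add_eq' hsplit

lemma sum_wt_bad (w r : ℕ) {N n₂ : ℕ} (ws rs : Finset (Fin n₂)) (h : Disjoint ws rs) :
    ∑ M : Fin N → Fin n₂ → Bool, Wt w r M * (if isBad M (ws, rs) then 1 else 0)
      = ((w + r) ^ n₂
          - w ^ ws.card * r ^ rs.card * (w + r) ^ (n₂ - (ws.card + rs.card))) ^ N := by
  classical
  have key : ∀ M : Fin N → Fin n₂ → Bool, Wt w r M * (if isBad M (ws, rs) then 1 else 0)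
      = ∏ x, ((∏ c, wt w r (M x c)) * (if good ws rs (M x) then 0 else 1)) := by
    intro M
    rw [Finset.prod_mul_distrib]
    congr 1
    have h0 : (if isBad M (ws, rs) then (1 : ℕ) else 0)
        = if ∀ x, ¬ good ws rs (M x) then 1 else 0 := by simp only [isBad]
    rw [h0, prod_ind]
    exact Finset.prod_congr rfl fun x _ => by by_cases hx : good ws rs (M x) <;> simp [hx]
  rw [Finset.sum_congr rfl fun M _ => key M,
    sum_wt_rows (fun v => (∏ c, wt w r (v c)) * (if good ws rs v then 0 else 1)),
    row_sum_notgood w r ws rs h]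

lemma row_sum_eqcols (w r : ℕ) {n₂ : ℕ} (c₀ c₁ : Fin n₂) (hne : c₀ ≠ c₁) :
    ∑ v : Fin n₂ → Bool, (∏ c, wt w r (v c)) * (if v c₀ = v c₁ then 1 else 0)
      = (w ^ 2 + r ^ 2) * (w + r) ^ (n₂ - 2) := by
  classical
  have h1 : ∀ v : Fin n₂ → Bool, (∏ c, wt w r (v c)) * (if v c₀ = v c₁ then 1 else 0)
      = if v c₀ = v c₁ then (∏ c, wt w r (v c)) else 0 := by
    intro v; by_cases hv : v c₀ = v c₁ <;> simp [hv]
  rw [Finset.sum_congr rfl fun v _ => h1 v, ← Finset.sum_filter]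
  set s2 : Finset (Fin n₂) := {c₀, c₁} with hs2
  have hcard2 : s2.card = 2 := by rw [hs2]; rw [Finset.card_insert_of_notMem (by simp [hne]),
    Finset.card_singleton]
  have hsplit : univ.filter (fun v : Fin n₂ → Bool => v c₀ = v c₁)
      = (univ.filter (fun v : Fin n₂ → Bool =>
           (∀ c ∈ s2, v c = true) ∧ (∀ c ∈ (∅ : Finset (Fin n₂)), v c = false)))
        ∪ (univ.filter (fun v : Fin n₂ → Bool =>
           (∀ c ∈ (∅ : Finset (Fin n₂)), v c = true) ∧ (∀ c ∈ s2, v c = false))) := by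
    ext v
    simp only [Finset.mem_union, mem_filter, mem_univ, true_and, Finset.notMem_empty,
      false_implies, implies_true, and_true, true_and, hs2, Finset.mem_insert,
      Finset.mem_singleton, forall_eq_or_imp, forall_eq]
    cases hv0 : v c₀ <;> cases hv1 : v c₁ <;> simp
  have hdisj : Disjoint
      (univ.filter (fun v : Fin n₂ → Bool =>
           (∀ c ∈ s2, v c = true) ∧ (∀ c ∈ (∅ : Finset (Fin n₂)), v c = false)))
      (univ.filter (fun v : Fin n₂ → Bool =>
           (∀ c ∈ (∅ : Finset (Fin n₂)), v c = true) ∧ (∀ c ∈ s2, v c = false))) := by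
    rw [Finset.disjoint_left]
    intro v hv1 hv2
    simp only [mem_filter, mem_univ, true_and] at hv1 hv2
    have e1 := hv1.1 c₀ (by simp [hs2])
    have e2 := hv2.2 c₀ (by simp [hs2])
    rw [e1] at e2; exact Bool.noConfusion e2
  rw [hsplit, Finset.sum_union hdisj,
    row_sum_fixed w r s2 ∅ (Finset.disjoint_empty_right _),
    row_sum_fixed w r ∅ s2 (Finset.disjoint_empty_left _), hcard2]
  simp [Finset.card_empty]
  ring

lemma sum_wt_dup (w r : ℕ) {N n₂ : ℕ} (c₀ c₁ : Fin n₂) (hne : c₀ ≠ c₁) :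
    ∑ M : Fin N → Fin n₂ → Bool, Wt w r M * (if (∀ x, M x c₀ = M x c₁) then 1 else 0)
      = ((w ^ 2 + r ^ 2) * (w + r) ^ (n₂ - 2)) ^ N := by
  classical
  have key : ∀ M : Fin N → Fin n₂ → Bool, Wt w r M * (if (∀ x, M x c₀ = M x c₁) then 1 else 0)
      = ∏ x, ((∏ c, wt w r (M x c)) * (if M x c₀ = M x c₁ then 1 else 0)) := by
    intro M
    rw [Finset.prod_mul_distrib]
    congr 1
    rw [prod_ind]
  rw [Finset.sum_congr rfl fun M _ => key M,
    sum_wt_rows (fun v => (∏ c, wt w r (v c)) * (if v c₀ = v c₁ then 1 else 0)),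
    row_sum_eqcols w r c₀ c₁ hne]

lemma sum_wt (w r N n₂ : ℕ) :
    ∑ M : Fin N → Fin n₂ → Bool, Wt w r M = ((w + r) ^ n₂) ^ N := by
  have : ∀ M : Fin N → Fin n₂ → Bool, Wt w r M = ∏ x, ∏ c, wt w r (M x c) := fun _ => rfl
  rw [Finset.sum_congr rfl fun M _ => this M,
    sum_wt_rows (fun v => ∏ c, wt w r (v c)), row_sum_total]

end ProbCFF

namespace ProbCFF

lemma L0 (w r : ℕ) (hw : 0 < w) (hr : 0 < r) :
    w ^ w * r ^ r ≤ w * r * (w + r) ^ (w + r - 2) := by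
  have hw' : w ^ w = w * w ^ (w - 1) := by rw [← pow_succ', Nat.sub_add_cancel hw]
  have hr' : r ^ r = r * r ^ (r - 1) := by rw [← pow_succ', Nat.sub_add_cancel hr]
  have he : (w - 1) + (r - 1) = w + r - 2 := by omega
  calc w ^ w * r ^ r = (w * w ^ (w - 1)) * (r * r ^ (r - 1)) := by rw [hw', hr']
    _ ≤ (w * (w + r) ^ (w - 1)) * (r * (w + r) ^ (r - 1)) :=
        Nat.mul_le_mul
          (Nat.mul_le_mul_left _ (Nat.pow_le_pow_left (Nat.le_add_right _ _) _))
          (Nat.mul_le_mul_left _ (Nat.pow_le_pow_left (Nat.le_add_left _ _) _))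
    _ = w * r * (w + r) ^ (w + r - 2) := by rw [mul_mul_mul_comm, ← pow_add, he]

lemma L1 (w r : ℕ) (hw : 0 < w) (hr : 0 < r) :
    4 * (w ^ w * r ^ r) ≤ (w + r) ^ (w + r) := by
  have h0 := L0 w r hw hr
  have h4 : 4 * (w * r) ≤ (w + r) ^ 2 := by nlinarith [two_mul_le_add_sq w r]
  calc 4 * (w ^ w * r ^ r) ≤ 4 * (w * r * (w + r) ^ (w + r - 2)) := Nat.mul_le_mul_left _ h0
    _ = (4 * (w * r)) * (w + r) ^ (w + r - 2) := by ring
    _ ≤ (w + r) ^ 2 * (w + r) ^ (w + r - 2) := Nat.mul_le_mul_right _ h4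
    _ = (w + r) ^ (w + r) := by
        rw [← pow_add]
        congr 1
        omega

lemma L2 (w r : ℕ) (hw : 0 < w) (hr : 0 < r) :
    (w ^ w * r ^ r) * (w + r) ^ 2 ≤ 2 * (w * r) * (w + r) ^ (w + r) := by
  have h0 := L0 w r hw hr
  calc (w ^ w * r ^ r) * (w + r) ^ 2 ≤ (w * r * (w + r) ^ (w + r - 2)) * (w + r) ^ 2 :=
        Nat.mul_le_mul_right _ h0
    _ = (w * r) * ((w + r) ^ (w + r - 2) * (w + r) ^ 2) := by ring
    _ = (w * r) * (w + r) ^ (w + r) := by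
        congr 1
        rw [← pow_add]
        congr 1
        omega
    _ ≤ 2 * (w * r) * (w + r) ^ (w + r) := by
        have h : (w * r) ≤ 2 * (w * r) := by omega
        exact Nat.mul_le_mul_right _ h

lemma QA_le (w r : ℕ) (hw : 0 < w) (hr : 0 < r) :
    (w ^ 2 + r ^ 2) * (w + r) ^ (w + r)
      ≤ ((w + r) ^ (w + r) - w ^ w * r ^ r) * (w + r) ^ 2 := by
  rw [Nat.sub_mul]
  refine Nat.le_sub_of_add_le ?_
  have h2 := L2 w r hw hr
  calc (w ^ 2 + r ^ 2) * (w + r) ^ (w + r) + w ^ w * r ^ r * (w + r) ^ 2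
      ≤ (w ^ 2 + r ^ 2) * (w + r) ^ (w + r) + 2 * (w * r) * (w + r) ^ (w + r) :=
        Nat.add_le_add_left h2 _
    _ = (w + r) ^ 2 * (w + r) ^ (w + r) := by ring
    _ = (w + r) ^ (w + r) * (w + r) ^ 2 := by ring

lemma exists_good_matrix (w r N T : ℕ) (hw : 0 < w) (hr : 0 < r) (hT : 0 < T)
    (h3 : 3 ≤ w + r)
    (hkey : ((w + r) ^ (w + r) - w ^ w * r ^ r) ^ N * (2 * T) ^ (w + r - 1)
              < ((w + r) ^ (w + r)) ^ N) :
    ∃ M : Fin N → Fin (2 * T) → Bool,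
      (badPairs w r M).card + (dupPairs M).card ≤ T := by
  classical
  set n₂ := 2 * T with hn₂
  have hspos : 0 < w + r := by omega
  set A := (w + r) ^ (w + r) with hA
  set B := w ^ w * r ^ r with hB
  set P := A - B with hP
  set Q := w ^ 2 + r ^ 2 with hQ
  set V1 := ((w + r) ^ n₂ - B * (w + r) ^ (n₂ - (w + r))) ^ N with hV1
  set V2 := (Q * (w + r) ^ (n₂ - 2)) ^ N with hV2
  set Tot := ((w + r) ^ n₂) ^ N with hTot
  have hTotpos : 0 < Tot := Nat.pow_pos (Nat.pow_pos hspos)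
  -- expectation bound for bad pairs
  have hbadsum : ∑ M : Fin N → Fin n₂ → Bool, Wt w r M * (badPairs w r M).card
      ≤ (cand w r n₂).card * V1 := by
    have h1 : ∀ M : Fin N → Fin n₂ → Bool, Wt w r M * (badPairs w r M).card
        = ∑ pr ∈ cand w r n₂, Wt w r M * (if isBad M pr then 1 else 0) := by
      intro M
      rw [badPairs, Finset.card_filter, Finset.mul_sum]
    rw [Finset.sum_congr rfl fun M _ => h1 M, Finset.sum_comm]
    have h2 : ∀ pr ∈ cand w r n₂,
        (∑ M : Fin N → Fin n₂ → Bool, Wt w r M * (if isBad M pr then 1 else 0)) = V1 := by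
      intro pr hpr
      rcases pr with ⟨ws, rs⟩
      rw [cand, Finset.mem_filter, Finset.mem_product] at hpr
      obtain ⟨⟨hws, hrs⟩, hdisj⟩ := hpr
      rw [Finset.mem_powersetCard] at hws hrs
      have h := sum_wt_bad w r (N := N) ws rs hdisj
      rw [hws.2, hrs.2] at h
      rw [← hB] at h
      rw [hV1]
      exact h
    rw [Finset.sum_congr rfl h2, Finset.sum_const, smul_eq_mul]
  -- expectation bound for duplicate pairs
  have hdupsum : ∑ M : Fin N → Fin n₂ → Bool, Wt w r M * (dupPairs M).card
      ≤ (n₂ * n₂) * V2 := by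
    have h1 : ∀ M : Fin N → Fin n₂ → Bool, Wt w r M * (dupPairs M).card
        = ∑ pr ∈ (univ ×ˢ univ : Finset (Fin n₂ × Fin n₂)),
            Wt w r M * (if pr.1 ≠ pr.2 ∧ (∀ x, M x pr.1 = M x pr.2) then 1 else 0) := by
      intro M; rw [dupPairs, Finset.card_filter, Finset.mul_sum]
    rw [Finset.sum_congr rfl fun M _ => h1 M, Finset.sum_comm]
    have h2 : ∀ pr ∈ (univ ×ˢ univ : Finset (Fin n₂ × Fin n₂)),
        (∑ M : Fin N → Fin n₂ → Bool,
          Wt w r M * (if pr.1 ≠ pr.2 ∧ (∀ x, M x pr.1 = M x pr.2) then 1 else 0)) ≤ V2 := by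
      intro pr _
      by_cases hne : pr.1 = pr.2
      · have h0 : ∀ M : Fin N → Fin n₂ → Bool,
            Wt w r M * (if pr.1 ≠ pr.2 ∧ (∀ x, M x pr.1 = M x pr.2) then 1 else 0) = 0 := by
          intro M; rw [if_neg (by simp [hne])]; ring
        rw [Finset.sum_congr rfl fun M _ => h0 M]
        simp
      · have heq : ∀ M : Fin N → Fin n₂ → Bool,
            Wt w r M * (if pr.1 ≠ pr.2 ∧ (∀ x, M x pr.1 = M x pr.2) then 1 else 0)
            = Wt w r M * (if (∀ x, M x pr.1 = M x pr.2) then 1 else 0) := by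
          intro M
          by_cases hM : ∀ x, M x pr.1 = M x pr.2
          · rw [if_pos ⟨hne, hM⟩, if_pos hM]
          · rw [if_neg (fun h => hM h.2), if_neg hM]
        refine le_of_eq ?_
        rw [Finset.sum_congr rfl fun M _ => heq M, sum_wt_dup w r pr.1 pr.2 hne, hV2, ← hQ]
    calc (∑ pr ∈ (univ ×ˢ univ : Finset (Fin n₂ × Fin n₂)),
          ∑ M : Fin N → Fin n₂ → Bool,
            Wt w r M * (if pr.1 ≠ pr.2 ∧ (∀ x, M x pr.1 = M x pr.2) then 1 else 0))
        ≤ ∑ _pr ∈ (univ ×ˢ univ : Finset (Fin n₂ × Fin n₂)), V2 := Finset.sum_le_sum h2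
      _ = (n₂ * n₂) * V2 := by
          rw [Finset.sum_const, smul_eq_mul, Finset.card_product, Finset.card_univ,
            Fintype.card_fin]
  -- part (a)
  have hApos : 0 < A := Nat.pow_pos hspos
  have hparta : (cand w r n₂).card * V1 < T * Tot := by
    rcases Nat.eq_zero_or_pos (cand w r n₂).card with hc0 | hcpos
    · rw [hc0, Nat.zero_mul]
      exact Nat.mul_pos hT hTotpos
    · obtain ⟨pr, hpr⟩ := Finset.card_pos.mp hcpos
      have hn2ered : w + r ≤ n₂ := by
        rcases pr with ⟨ws, rs⟩
        rw [cand, Finset.mem_filter, Finset.mem_product] at hpr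
        obtain ⟨⟨hws, hrs⟩, hdisj⟩ := hpr
        rw [Finset.mem_powersetCard] at hws hrs
        have := Finset.card_le_univ (ws ∪ rs)
        rw [Finset.card_union_of_disjoint hdisj, hws.2, hrs.2] at this
        simpa using this
      -- rewrite V1 and Tot
      have hpowsplit : (w + r) ^ n₂ = A * (w + r) ^ (n₂ - (w + r)) := by
        rw [hA, ← pow_add]
        congr 1
        omega
      have hV1eq : V1 = P ^ N * ((w + r) ^ (n₂ - (w + r))) ^ N := by
        rw [hV1, hpowsplit, ← Nat.sub_mul, mul_pow]
      have hToteq : Tot = A ^ N * ((w + r) ^ (n₂ - (w + r))) ^ N := by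
        rw [hTot, hpowsplit, mul_pow]
      rw [hV1eq, hToteq, ← mul_assoc, ← mul_assoc]
      refine (Nat.mul_lt_mul_right (Nat.pow_pos (Nat.pow_pos hspos))).mpr ?_
      -- goal : cand.card * P ^ N < T * A ^ N
      have hcand_le : (cand w r n₂).card * (w.factorial * r.factorial) ≤ n₂ ^ (w + r) := by
        have hsubset : (cand w r n₂).card ≤ (n₂.choose w) * (n₂.choose r) := by
          have := Finset.card_filter_le
            ((univ.powersetCard w ×ˢ univ.powersetCard r :
              Finset (Finset (Fin n₂) × Finset (Fin n₂))))
            (fun pr => Disjoint pr.1 pr.2)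
          rw [Finset.card_product, Finset.card_powersetCard, Finset.card_powersetCard,
            Finset.card_univ, Fintype.card_fin] at this
          exact this
        calc (cand w r n₂).card * (w.factorial * r.factorial)
            ≤ ((n₂.choose w) * (n₂.choose r)) * (w.factorial * r.factorial) :=
              Nat.mul_le_mul_right _ hsubset
          _ = (w.factorial * n₂.choose w) * (r.factorial * n₂.choose r) := by ring
          _ = n₂.descFactorial w * n₂.descFactorial r := by
              rw [← Nat.descFactorial_eq_factorial_mul_choose,
                ← Nat.descFactorial_eq_factorial_mul_choose]
          _ ≤ n₂ ^ w * n₂ ^ r :=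
              Nat.mul_le_mul (Nat.descFactorial_le_pow _ _) (Nat.descFactorial_le_pow _ _)
          _ = n₂ ^ (w + r) := by rw [← pow_add]
      have h2fact : 2 ≤ w.factorial * r.factorial := by
        rcases Nat.lt_or_ge w 2 with hw2 | hw2
        · have hr2 : 2 ≤ r := by omega
          have : 2 ≤ r.factorial := le_trans hr2 (Nat.self_le_factorial r)
          have hwf : 1 ≤ w.factorial := Nat.factorial_pos w
          calc 2 = 1 * 2 := by ring
            _ ≤ w.factorial * r.factorial := Nat.mul_le_mul hwf this
        · have : 2 ≤ w.factorial := le_trans hw2 (Nat.self_le_factorial w)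
          have hrf : 1 ≤ r.factorial := Nat.factorial_pos r
          calc 2 = 2 * 1 := by ring
            _ ≤ w.factorial * r.factorial := Nat.mul_le_mul this hrf
      have h2cand : 2 * (cand w r n₂).card ≤ n₂ ^ (w + r) :=
        le_trans (by
          rw [Nat.mul_comm]
          exact Nat.mul_le_mul_left _ h2fact) hcand_le
      have hexp : n₂ ^ (w + r) = n₂ * n₂ ^ (w + r - 1) := by
        conv_lhs => rw [show w + r = (w + r - 1) + 1 by omega]
        rw [pow_succ]
        ring
      have hstep : 2 * ((cand w r n₂).card * P ^ N) < 2 * (T * A ^ N) := by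
        calc 2 * ((cand w r n₂).card * P ^ N) = (2 * (cand w r n₂).card) * P ^ N := by ring
          _ ≤ n₂ ^ (w + r) * P ^ N := Nat.mul_le_mul_right _ h2cand
          _ = n₂ * (P ^ N * n₂ ^ (w + r - 1)) := by rw [hexp]; ring
          _ < n₂ * A ^ N := by
              have hn2pos : 0 < n₂ := by omega
              exact (Nat.mul_lt_mul_left hn2pos).mpr hkey
          _ = 2 * (T * A ^ N) := by rw [hn₂]; ring
      exact Nat.lt_of_mul_lt_mul_left hstep
  -- part (b)
  have hpartb : (n₂ * n₂) * V2 ≤ Tot := by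
    have hn2ge2 : 2 ≤ n₂ := by omega
    have hpowsplit : (w + r) ^ n₂ = (w + r) ^ 2 * (w + r) ^ (n₂ - 2) := by
      rw [← pow_add]
      congr 1
      omega
    have hToteq : Tot = ((w + r) ^ 2) ^ N * ((w + r) ^ (n₂ - 2)) ^ N := by
      rw [hTot, hpowsplit, mul_pow]
    have hV2eq : (n₂ * n₂) * V2 = (n₂ * n₂ * Q ^ N) * ((w + r) ^ (n₂ - 2)) ^ N := by
      rw [hV2, mul_pow]; ring
    rw [hToteq, hV2eq]
    refine Nat.mul_le_mul_right _ ?_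
    -- goal : n₂ * n₂ * Q ^ N ≤ ((w + r) ^ 2) ^ N
    have hQA : Q ^ N * A ^ N ≤ P ^ N * ((w + r) ^ 2) ^ N := by
      rw [← mul_pow, ← mul_pow]
      exact Nat.pow_le_pow_left (QA_le w r hw hr) N
    have h2T2 : n₂ * n₂ ≤ n₂ ^ (w + r - 1) := by
      have : n₂ * n₂ = n₂ ^ 2 := by ring
      rw [this]
      exact Nat.pow_le_pow_right (by omega) (by omega)
    have hchain : (n₂ * n₂ * Q ^ N) * A ^ N ≤ ((w + r) ^ 2) ^ N * A ^ N := by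
      calc (n₂ * n₂ * Q ^ N) * A ^ N = (n₂ * n₂) * (Q ^ N * A ^ N) := by ring
        _ ≤ (n₂ * n₂) * (P ^ N * ((w + r) ^ 2) ^ N) := Nat.mul_le_mul_left _ hQA
        _ ≤ n₂ ^ (w + r - 1) * (P ^ N * ((w + r) ^ 2) ^ N) := Nat.mul_le_mul_right _ h2T2
        _ = (P ^ N * n₂ ^ (w + r - 1)) * ((w + r) ^ 2) ^ N := by ring
        _ ≤ A ^ N * ((w + r) ^ 2) ^ N := Nat.mul_le_mul_right _ (le_of_lt hkey)
        _ = ((w + r) ^ 2) ^ N * A ^ N := by ring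
    exact Nat.le_of_mul_le_mul_right hchain (Nat.pow_pos hApos)
  -- combine and pigeonhole
  have hS : ∑ M : Fin N → Fin n₂ → Bool,
      Wt w r M * ((badPairs w r M).card + (dupPairs M).card) < (T + 1) * Tot := by
    have hsplit : ∑ M : Fin N → Fin n₂ → Bool,
        Wt w r M * ((badPairs w r M).card + (dupPairs M).card)
        = (∑ M : Fin N → Fin n₂ → Bool, Wt w r M * (badPairs w r M).card)
          + ∑ M : Fin N → Fin n₂ → Bool, Wt w r M * (dupPairs M).card := by
      rw [← Finset.sum_add_distrib]
      exact Finset.sum_congr rfl fun M _ => by ring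
    rw [hsplit]
    calc (∑ M : Fin N → Fin n₂ → Bool, Wt w r M * (badPairs w r M).card)
          + (∑ M : Fin N → Fin n₂ → Bool, Wt w r M * (dupPairs M).card)
        ≤ (cand w r n₂).card * V1 + (n₂ * n₂) * V2 := Nat.add_le_add hbadsum hdupsum
      _ < T * Tot + Tot := by
          have := Nat.add_lt_add_of_lt_of_le hparta hpartb
          exact this
      _ = (T + 1) * Tot := by ring
  by_contra hcon
  push_neg at hcon
  have hlower : (T + 1) * Tot ≤ ∑ M : Fin N → Fin n₂ → Bool,
      Wt w r M * ((badPairs w r M).card + (dupPairs M).card) := by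
    rw [hTot, ← sum_wt w r N n₂, Finset.mul_sum]
    refine Finset.sum_le_sum fun M _ => ?_
    have hM : T + 1 ≤ (badPairs w r M).card + (dupPairs M).card := hcon M
    calc (T + 1) * Wt w r M ≤ ((badPairs w r M).card + (dupPairs M).card) * Wt w r M :=
          Nat.mul_le_mul_right _ hM
      _ = Wt w r M * ((badPairs w r M).card + (dupPairs M).card) := by ring
  exact absurd hS (not_lt.mpr hlower)

end ProbCFF

namespace ProbCFF

lemma construct (w r N T : ℕ) (hw : 0 < w) (hr : 0 < r) (hT : 0 < T)
    (M : Fin N → Fin (2 * T) → Bool)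
    (hX : (badPairs w r M).card + (dupPairs M).card ≤ T) :
    ∃ F : Finset (Finset (Fin N)), F.card = T ∧ IsCFF w r 0 F := by
  classical
  have hn2pos : 0 < 2 * T := by omega
  set colSet : Fin (2 * T) → Finset (Fin N) :=
    fun c => univ.filter (fun x => M x c = true) with hcolSet
  set pick : Finset (Fin (2 * T)) → Fin (2 * T) :=
    fun s => if h : s.Nonempty then s.min' h else ⟨0, hn2pos⟩ with hpickdef
  have hpick : ∀ s : Finset (Fin (2 * T)), s.Nonempty → pick s ∈ s := by
    intro s hs
    rw [hpickdef]
    simp only [dif_pos hs]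
    exact Finset.min'_mem s hs
  set D : Finset (Fin (2 * T)) :=
    (badPairs w r M).image (fun pr => pick pr.1) ∪ (dupPairs M).image Prod.fst with hD
  have hDcard : D.card ≤ T := by
    refine le_trans (Finset.card_union_le _ _) (le_trans ?_ hX)
    exact Nat.add_le_add (Finset.card_image_le) (Finset.card_image_le)
  set G : Finset (Fin (2 * T)) := univ \ D with hG
  have hGcard : T ≤ G.card := by
    rw [hG, Finset.card_sdiff_of_subset (Finset.subset_univ _), Finset.card_univ, Fintype.card_fin]
    omega
  obtain ⟨I, hIG, hIcard⟩ := Finset.exists_subset_card_eq hGcard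
  have hnotinD : ∀ c ∈ I, c ∉ D := by
    intro c hc
    exact (Finset.mem_sdiff.mp (hIG hc)).2
  have hinj : Set.InjOn colSet ↑I := by
    intro c hc c' hc' hcc
    by_contra hne
    have hall : ∀ x, M x c = M x c' := by
      intro x
      have hx : (M x c = true) ↔ (M x c' = true) := by
        constructor
        · intro h
          have hmem : x ∈ colSet c := by simp [hcolSet, h]
          rw [hcc] at hmem
          simpa [hcolSet] using hmem
        · intro h
          have hmem : x ∈ colSet c' := by simp [hcolSet, h]
          rw [← hcc] at hmem
          simpa [hcolSet] using hmem
      cases hMx : M x c <;> cases hMx' : M x c' <;> simp_all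
    have hdup : (c, c') ∈ dupPairs M := by
      rw [dupPairs, Finset.mem_filter]
      exact ⟨Finset.mem_product.mpr ⟨Finset.mem_univ _, Finset.mem_univ _⟩, hne, hall⟩
    have hcD : c ∈ D := by
      rw [hD]
      exact Finset.mem_union_right _ (Finset.mem_image_of_mem Prod.fst hdup)
    exact hnotinD c (Finset.mem_coe.mp hc) hcD
  refine ⟨I.image colSet, ?_, ?_⟩
  · rw [Finset.card_image_of_injOn hinj, hIcard]
  · intro WS RS hWS hRS hcardw hcardr hdisjWR
    obtain ⟨ws, hwsI, hwsim⟩ := Finset.subset_image_iff.mp hWS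
    obtain ⟨rs, hrsI, hrsim⟩ := Finset.subset_image_iff.mp hRS
    have hwscard : ws.card = w := by
      rw [← hcardw, ← hwsim,
        Finset.card_image_of_injOn (hinj.mono (Finset.coe_subset.mpr hwsI))]
    have hrscard : rs.card = r := by
      rw [← hcardr, ← hrsim,
        Finset.card_image_of_injOn (hinj.mono (Finset.coe_subset.mpr hrsI))]
    have hdisj : Disjoint ws rs := by
      rw [Finset.disjoint_left]
      intro c hcws hcrs
      have h1 : colSet c ∈ WS := hwsim ▸ Finset.mem_image_of_mem _ hcws
      have h2 : colSet c ∈ RS := hrsim ▸ Finset.mem_image_of_mem _ hcrs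
      exact (Finset.disjoint_left.mp hdisjWR h1) h2
    have hcand : (ws, rs) ∈ cand w r (2 * T) := by
      rw [cand, Finset.mem_filter, Finset.mem_product]
      exact ⟨⟨Finset.mem_powersetCard.mpr ⟨Finset.subset_univ _, hwscard⟩,
        Finset.mem_powersetCard.mpr ⟨Finset.subset_univ _, hrscard⟩⟩, hdisj⟩
    have hnotbad : ¬ isBad M (ws, rs) := by
      intro hbad
      have hmem : (ws, rs) ∈ badPairs w r M := Finset.mem_filter.mpr ⟨hcand, hbad⟩
      have hwsne : ws.Nonempty := Finset.card_pos.mp (by rw [hwscard]; exact hw)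
      have hcD : pick ws ∈ D := by
        rw [hD]
        exact Finset.mem_union_left _
          (Finset.mem_image.mpr ⟨_, hmem, rfl⟩)
      exact hnotinD _ (hwsI (hpick ws hwsne)) hcD
    rw [isBad] at hnotbad
    push_neg at hnotbad
    obtain ⟨x, hxgood⟩ := hnotbad
    obtain ⟨hxw, hxr⟩ := hxgood
    refine Finset.card_pos.mpr ⟨x, Finset.mem_sdiff.mpr ⟨?_, ?_⟩⟩
    · rw [← hwsim, Finset.inf_image]
      refine mem_finset_inf.mpr fun c hc => ?_
      simp only [Function.comp_apply, id_eq]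
      simp [hcolSet, hxw c hc]
    · rw [← hrsim, Finset.sup_image]
      intro hxs
      obtain ⟨c, hc, hmemc⟩ := Finset.mem_sup.mp hxs
      simp only [Function.comp_apply, id_eq, hcolSet, Finset.mem_filter] at hmemc
      have := hxr c hc
      rw [hmemc.2] at this
      exact Bool.noConfusion this

end ProbCFF

namespace ProbCFF

lemma key_real (w r N T : ℕ) (hw : 0 < w) (hr : 0 < r) (hT : 0 < T)
    (hN : (N : ℝ) >
      ((w + r - 1 : ℝ) * Real.logb 2 (2 * T)) /
        (-Real.logb 2 (1 - (w : ℝ) ^ w * (r : ℝ) ^ r / ((w : ℝ) + r) ^ (w + r)))) :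
    ((w + r) ^ (w + r) - w ^ w * r ^ r) ^ N * (2 * T) ^ (w + r - 1)
      < ((w + r) ^ (w + r)) ^ N := by
  have hBAnat : w ^ w * r ^ r ≤ (w + r) ^ (w + r) := by
    have := L1 w r hw hr
    omega
  set A : ℝ := ((w : ℝ) + r) ^ (w + r) with hA
  set B : ℝ := (w : ℝ) ^ w * (r : ℝ) ^ r with hB
  have hwr : (0 : ℝ) < (w : ℝ) + r := by positivity
  have hApos : 0 < A := by positivity
  have hBpos : 0 < B := by
    have hw' : (0 : ℝ) < (w : ℝ) := by exact_mod_cast hw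
    have hr' : (0 : ℝ) < (r : ℝ) := by exact_mod_cast hr
    positivity
  have h4BA : 4 * B ≤ A := by
    have := L1 w r hw hr
    rw [hA, hB]
    exact_mod_cast this
  set p : ℝ := 1 - B / A with hp
  have hq0 : 0 < B / A := div_pos hBpos hApos
  have hq1 : B / A < 1 := by
    rw [div_lt_one hApos]
    linarith
  have hp0 : 0 < p := by rw [hp]; linarith
  have hp1 : p < 1 := by rw [hp]; linarith
  have hlogneg : Real.logb 2 p < 0 := Real.logb_neg (by norm_num) hp0 hp1
  have hdpos : 0 < -Real.logb 2 p := by linarith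
  have h2T1 : (1 : ℝ) < 2 * (T : ℝ) := by
    have : (1 : ℝ) ≤ (T : ℝ) := by exact_mod_cast hT
    linarith
  have h2Tpos : (0 : ℝ) < 2 * (T : ℝ) := by linarith
  have hlog2T : 0 < Real.logb 2 (2 * (T : ℝ)) := Real.logb_pos (by norm_num) h2T1
  have hcast : ((w + r - 1 : ℕ) : ℝ) = (w : ℝ) + r - 1 := by
    rw [Nat.cast_sub (by omega : 1 ≤ w + r)]
    push_cast
    ring
  -- main log inequality
  have hmain : ((w : ℝ) + r - 1) * Real.logb 2 (2 * T) < (N : ℝ) * (-Real.logb 2 p) := by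
    have := (div_lt_iff₀ hdpos).mp hN
    linarith
  have hlt : p ^ N * (2 * (T : ℝ)) ^ (w + r - 1) < 1 := by
    have hppow : (0 : ℝ) < p ^ N := pow_pos hp0 N
    have h2pow : (0 : ℝ) < (2 * (T : ℝ)) ^ (w + r - 1) := pow_pos h2Tpos _
    have hlogval : Real.logb 2 (p ^ N * (2 * (T : ℝ)) ^ (w + r - 1)) < 0 := by
      rw [Real.logb_mul (ne_of_gt hppow) (ne_of_gt h2pow), Real.logb_pow, Real.logb_pow]
      have : ((w + r - 1 : ℕ) : ℝ) * Real.logb 2 (2 * T) < (N : ℝ) * (-Real.logb 2 p) := by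
        rw [hcast]; exact hmain
      nlinarith [this]
    exact (Real.logb_neg_iff (by norm_num) (by positivity)).mp hlogval
  have hpeq : p = (A - B) / A := by
    rw [hp]
    field_simp
  rw [hpeq, div_pow, div_mul_eq_mul_div, div_lt_one (pow_pos hApos N)] at hlt
  -- hlt : (A - B) ^ N * (2 * T) ^ (w + r - 1) < A ^ N
  have hABcast : ((( (w + r) ^ (w + r) - w ^ w * r ^ r : ℕ)) : ℝ) = A - B := by
    rw [Nat.cast_sub hBAnat, hA, hB]
    push_cast
    ring
  have hAcast : (((w + r) ^ (w + r) : ℕ) : ℝ) = A := by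
    rw [hA]; push_cast; ring
  rw [show ((2 : ℝ) * T) = ((2 * T : ℕ) : ℝ) by push_cast; ring] at hlt
  rw [← hABcast, ← hAcast] at hlt
  exact_mod_cast hlt

lemma four_pow_le_central (n : ℕ) : 4 ^ n ≤ 2 * n.choose (n / 2) * 3 ^ n := by
  induction n with
  | zero => norm_num
  | succ n ih =>
    rcases Nat.eq_zero_or_pos n with rfl | hn
    · norm_num
    · have hstep : 4 * n.choose (n / 2) ≤ 3 * (n + 1).choose ((n + 1) / 2) := by
        rcases Nat.even_or_odd n with ⟨m, hm⟩ | ⟨m, hm⟩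
        · have hm1 : 1 ≤ m := by omega
          have hdiv : n / 2 = m := by omega
          have hdiv1 : (n + 1) / 2 = m := by omega
          have hid : (n + 1) * n.choose m = (n + 1).choose (m + 1) * (m + 1) := by
            simpa [Nat.succ_eq_add_one] using Nat.add_one_mul_choose_eq n m
          have hsymm : (n + 1).choose m = (n + 1).choose (m + 1) := by
            have h0 := Nat.choose_symm (show m + 1 ≤ n + 1 by omega)
            rw [show n + 1 - (m + 1) = m by omega] at h0
            exact h0
          rw [hdiv, hdiv1]
          have hco : 4 * (m + 1) ≤ 3 * (n + 1) := by omega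
          have hmain : (4 * n.choose m) * (m + 1) ≤ (3 * (n + 1).choose m) * (m + 1) := by
            calc (4 * n.choose m) * (m + 1) = (4 * (m + 1)) * n.choose m := by ring
              _ ≤ (3 * (n + 1)) * n.choose m := Nat.mul_le_mul_right _ hco
              _ = 3 * ((n + 1) * n.choose m) := by ring
              _ = 3 * ((n + 1).choose (m + 1) * (m + 1)) := by rw [← hid]
              _ = (3 * (n + 1).choose m) * (m + 1) := by rw [hsymm]; ring
          exact Nat.le_of_mul_le_mul_right hmain (by omega)
        · have hdiv : n / 2 = m := by omega
          have hdiv1 : (n + 1) / 2 = m + 1 := by omega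
          have hsymm : n.choose (m + 1) = n.choose m := by
            have h0 := Nat.choose_symm (show m + 1 ≤ n by omega)
            rw [show n - (m + 1) = m by omega] at h0
            exact h0.symm
          have hps : (n + 1).choose (m + 1) = n.choose m + n.choose (m + 1) :=
            Nat.choose_succ_succ n m
          rw [hdiv, hdiv1, hps, hsymm]
          omega
      calc 4 ^ (n + 1) = 4 * 4 ^ n := by ring
        _ ≤ 4 * (2 * n.choose (n / 2) * 3 ^ n) := Nat.mul_le_mul_left _ ih
        _ = 2 * (4 * n.choose (n / 2)) * 3 ^ n := by ring
        _ ≤ 2 * (3 * (n + 1).choose ((n + 1) / 2)) * 3 ^ n := by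
            exact Nat.mul_le_mul_right _ (Nat.mul_le_mul_left _ hstep)
        _ = 2 * (n + 1).choose ((n + 1) / 2) * 3 ^ (n + 1) := by ring

lemma caseB (N T : ℕ) (hT : 0 < T) (h34 : 3 ^ N * (2 * T) < 4 ^ N) :
    ∃ F : Finset (Finset (Fin N)), F.card = T ∧ IsCFF 1 1 0 F := by
  classical
  have hTC : T ≤ N.choose (N / 2) := by
    have h := four_pow_le_central N
    have h2 : 3 ^ N * (2 * T) < 3 ^ N * (2 * N.choose (N / 2)) := by
      calc 3 ^ N * (2 * T) < 4 ^ N := h34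
        _ ≤ 2 * N.choose (N / 2) * 3 ^ N := h
        _ = 3 ^ N * (2 * N.choose (N / 2)) := by ring
    have := Nat.lt_of_mul_lt_mul_left h2
    omega
  have hcardP : T ≤ (Finset.powersetCard (N / 2) (univ : Finset (Fin N))).card := by
    rw [Finset.card_powersetCard, Finset.card_univ, Fintype.card_fin]
    exact hTC
  obtain ⟨F, hFsub, hFcard⟩ := Finset.exists_subset_card_eq hcardP
  refine ⟨F, hFcard, ?_⟩
  intro WS RS hWS hRS hcw hcr hdisj
  obtain ⟨S₁, rfl⟩ := Finset.card_eq_one.mp hcw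
  obtain ⟨S₂, rfl⟩ := Finset.card_eq_one.mp hcr
  have hne : S₁ ≠ S₂ := by
    intro h
    subst h
    have := Finset.disjoint_left.mp hdisj (Finset.mem_singleton_self S₁)
    exact this (Finset.mem_singleton_self S₁)
  have hS₁ : S₁ ∈ F := hWS (Finset.mem_singleton_self S₁)
  have hS₂ : S₂ ∈ F := hRS (Finset.mem_singleton_self S₂)
  have hc₁ : S₁.card = N / 2 := (Finset.mem_powersetCard.mp (hFsub hS₁)).2
  have hc₂ : S₂.card = N / 2 := (Finset.mem_powersetCard.mp (hFsub hS₂)).2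
  rw [Finset.inf_singleton, Finset.sup_singleton, id_eq, id_eq]
  refine Finset.card_pos.mpr ?_
  by_contra hempty
  rw [Finset.not_nonempty_iff_eq_empty] at hempty
  have hsub : S₁ ⊆ S₂ := by
    rw [← Finset.sdiff_eq_empty_iff_subset]
    exact hempty
  exact hne (Finset.eq_of_subset_of_card_le hsub (by rw [hc₁, hc₂]))

end ProbCFF

/-- Probabilistic existence: with `p = 1 - w^w r^r/(w+r)^{w+r}`, if
`N > (w+r-1) log₂ (2T) / (-log₂ p)`, then a `(w,r)`-CFF(N,T) exists. -/
theorem prob_cff_exists (w r N T : ℕ) (hw : 0 < w) (hr : 0 < r) (hT : 0 < T)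
    (hN : (N : ℝ) >
      ((w + r - 1 : ℝ) * Real.logb 2 (2 * T)) /
        (-Real.logb 2 (1 - (w : ℝ) ^ w * (r : ℝ) ^ r / ((w : ℝ) + r) ^ (w + r)))) :
    ∃ F : Finset (Finset (Fin N)), F.card = T ∧ IsCFF w r 0 F := by
  have hkey := ProbCFF.key_real w r N T hw hr hT hN
  rcases le_or_gt 3 (w + r) with h3 | h3
  · obtain ⟨M, hM⟩ := ProbCFF.exists_good_matrix w r N T hw hr hT h3 hkey
    exact ProbCFF.construct w r N T hw hr hT M hM
  · have hw1 : w = 1 := by omega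
    have hr1 : r = 1 := by omega
    subst hw1
    subst hr1
    have h34 : 3 ^ N * (2 * T) < 4 ^ N := by
      simpa using hkey
    exact ProbCFF.caseB N T hT h34
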